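/- Let f : ℝⁿ → ℝ ∪ {+∞} be proper with f(x̄) finite, and suppose x̄ is a local minimizer of f. Then for every nonzero u in the critical cone C_f(x̄, 0) = {u : df(x̄)(u) = 0} and every w ∈ ℝⁿ, the parabolic subderivative satisfies d²f(x̄)(u | w) ≥ 0. -/
import Mathlib


open Filter Topology

variable {n : ℕ}

/-- The subderivative of an extended-real-valued function. -/
noncomputable def subderivE (f : EuclideanSpace ℝ (Fin n) → EReal)
    (x u : EuclideanSpace ℝ (Fin n)) : EReal :=
  Filter.liminf
    (fun p : ℝ × EuclideanSpace ℝ (Fin n) =>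
      (f (x + p.1 • p.2) - f x) / ((p.1 : ℝ) : EReal))
    ((𝓝[>] (0:ℝ)) ×ˢ 𝓝 u)

/-- The parabolic subderivative of an extended-real-valued function. -/
noncomputable def parabolicSubderivE (f : EuclideanSpace ℝ (Fin n) → EReal)
    (x u w : EuclideanSpace ℝ (Fin n)) : EReal :=
  Filter.liminf
    (fun p : ℝ × EuclideanSpace ℝ (Fin n) =>
      (f (x + p.1 • u + (p.1 ^ 2 / 2) • p.2) - f x -
          ((p.1 * (subderivE f x u).toReal : ℝ) : EReal)) / ((p.1 ^ 2 / 2 : ℝ) : EReal))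
    ((𝓝[>] (0:ℝ)) ×ˢ 𝓝 w)

/-- Second-order necessary optimality condition: at a local minimizer `x̄` of a proper
function `f`, the parabolic subderivative is nonnegative along every nonzero critical
direction (a direction with `df(x̄)(u) = 0`). -/
theorem parabolicSubderiv_nonneg_at_local_min
    (f : EuclideanSpace ℝ (Fin n) → EReal)
    (xb : EuclideanSpace ℝ (Fin n)) (hfin_top : f xb ≠ ⊤) (hfin_bot : f xb ≠ ⊥)
    (hmin : ∀ᶠ x in 𝓝 xb, f xb ≤ f x) :
    ∀ u : EuclideanSpace ℝ (Fin n), u ≠ 0 → subderivE f xb u = 0 →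
      ∀ w : EuclideanSpace ℝ (Fin n), 0 ≤ parabolicSubderivE f xb u w := by
  intro u hu hsub w
  have hc : Continuous
      (fun p : ℝ × EuclideanSpace ℝ (Fin n) => xb + p.1 • u + (p.1 ^ 2 / 2) • p.2) := by
    fun_prop
  have hle : (𝓝[>] (0:ℝ)) ×ˢ 𝓝 w ≤ 𝓝 ((0:ℝ), w) := by
    rw [nhds_prod_eq]
    exact Filter.prod_mono nhdsWithin_le_nhds le_rfl
  have htend : Filter.Tendsto
      (fun p : ℝ × EuclideanSpace ℝ (Fin n) => xb + p.1 • u + (p.1 ^ 2 / 2) • p.2)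
      ((𝓝[>] (0:ℝ)) ×ˢ 𝓝 w) (𝓝 xb) := by
    have h2 := (hc.tendsto ((0:ℝ), w)).mono_left hle
    simpa using h2
  have hev : ∀ᶠ p : ℝ × EuclideanSpace ℝ (Fin n) in (𝓝[>] (0:ℝ)) ×ˢ 𝓝 w,
      f xb ≤ f (xb + p.1 • u + (p.1 ^ 2 / 2) • p.2) := htend.eventually hmin
  have hpos : ∀ᶠ p : ℝ × EuclideanSpace ℝ (Fin n) in (𝓝[>] (0:ℝ)) ×ˢ 𝓝 w,
      0 < p.1 := by
    have : ∀ᶠ t in 𝓝[>] (0:ℝ), 0 < t := eventually_mem_nhdsWithin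
    exact this.prod_inl (𝓝 w)
  unfold parabolicSubderivE
  apply Filter.le_liminf_of_le (by isBoundedDefault)
  filter_upwards [hev, hpos] with p h1 h2
  rw [hsub]
  simp only [EReal.toReal_zero, mul_zero, EReal.coe_zero, sub_zero]
  apply EReal.div_nonneg
  · rw [EReal.le_sub_iff_add_le (Or.inl hfin_bot) (Or.inl hfin_top)]
    simpa using h1
  · exact_mod_cast le_of_lt (by positivity : (0:ℝ) < p.1 ^ 2 / 2)
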